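/- (Theorem 2, finite-alphabet form.) Fix δ₁ > 0 and, for each b ∈ ℬ^k, a partition of s = {1,…,k} into a nonempty set sdif(b) and its complement seq(b) in s. Then for every decoder d, the error probability satisfies pe ≥ P[ ι^n(X_{sdif(β_s)}; Y | X_{seq(β_s)}, β_s) ≤ log C(p−k+ℓ, ℓ) + log δ₁ ] − δ₁, where ℓ := |sdif(β_s)|, C(·,·) denotes binomial coefficients, and the probability is under the joint law conditioned on S = s. -/

import Mathlib

namespace SRCAux
open Finset
open Finset

lemma sum_fn_prod {ι κ : Type*} [DecidableEq ι] [Fintype ι] [Fintype κ] (f : ι → κ → ℝ) :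
    ∑ g : ι → κ, ∏ i, f i (g i) = ∏ i, ∑ j, f i j := by
  classical
  rw [← Fintype.piFinset_univ, Finset.sum_prod_piFinset]

lemma exists_perm_orderEmb {α : Type*} [Fintype α] [LinearOrder α] (u v : Finset α) {m : ℕ}
    (hu : u.card = m) (hv : v.card = m) :
    ∃ ρ : Equiv.Perm α, ∀ i : Fin m, ρ (u.orderEmbOfFin hu i) = v.orderEmbOfFin hv i := by
  classical
  have hcu : uᶜ.card = Fintype.card α - m := by rw [Finset.card_compl, hu]
  have hcv : vᶜ.card = Fintype.card α - m := by rw [Finset.card_compl, hv]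
  let e1u : {x // x ∈ u} ≃ Fin m := (u.orderIsoOfFin hu).toEquiv.symm
  let e2u : {x // ¬ x ∈ u} ≃ Fin (Fintype.card α - m) :=
    (Equiv.subtypeEquivRight (fun x => (Finset.mem_compl (s := u)).symm)).trans
      (uᶜ.orderIsoOfFin hcu).toEquiv.symm
  let e1v : {x // x ∈ v} ≃ Fin m := (v.orderIsoOfFin hv).toEquiv.symm
  let e2v : {x // ¬ x ∈ v} ≃ Fin (Fintype.card α - m) :=
    (Equiv.subtypeEquivRight (fun x => (Finset.mem_compl (s := v)).symm)).trans
      (vᶜ.orderIsoOfFin hcv).toEquiv.symm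
  refine ⟨((Equiv.sumCompl (· ∈ u)).symm.trans ((Equiv.sumCongr e1u e2u).trans
      ((Equiv.sumCongr e1v e2v).symm.trans (Equiv.sumCompl (· ∈ v))))), fun i => ?_⟩
  have hmem : u.orderEmbOfFin hu i ∈ u := u.orderEmbOfFin_mem hu i
  simp only [Equiv.trans_apply]
  rw [Equiv.sumCompl_symm_apply_of_pos hmem]
  simp only [Equiv.sumCongr_apply, Sum.map_inl, Equiv.sumCongr_symm, Equiv.sumCompl_apply_inl]
  have h1 : e1u ⟨u.orderEmbOfFin hu i, hmem⟩ = i := by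
    apply (u.orderIsoOfFin hu).injective
    simp [e1u]
    apply Subtype.ext
    rw [Finset.coe_orderIsoOfFin_apply]
  rw [h1]
  have h2 : e1v.symm i = ⟨v.orderEmbOfFin hv i, v.orderEmbOfFin_mem hv i⟩ := by
    apply Subtype.ext
    simp [e1v]
  rw [h2]

lemma exists_perm_fix_image {α : Type*} [DecidableEq α] [Fintype α] [LinearOrder α] (w t u : Finset α)
    (htw : Disjoint t w) (huw : Disjoint u w) (hcard : t.card = u.card) :
    ∃ ρ : Equiv.Perm α, (∀ j ∈ w, ρ j = j) ∧ Finset.image (⇑ρ) t = u := by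
  have htP : ∀ j ∈ t, j ∈ wᶜ := fun j hj => Finset.mem_compl.2 (Finset.disjoint_left.1 htw hj)
  have huP : ∀ j ∈ u, j ∈ wᶜ := fun j hj => Finset.mem_compl.2 (Finset.disjoint_left.1 huw hj)
  set t' : Finset {x // x ∈ wᶜ} := t.subtype _ with ht'
  set u' : Finset {x // x ∈ wᶜ} := u.subtype _ with hu'
  have hct : t'.card = t.card := by
    conv_rhs => rw [← Finset.subtype_map_of_mem htP]
    rw [Finset.card_map]
  have hcu : u'.card = t'.card := by
    rw [hct, hcard]
    conv_rhs => rw [← Finset.subtype_map_of_mem huP]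
    rw [Finset.card_map]
  obtain ⟨ρ', hρ'⟩ := exists_perm_orderEmb t' u' rfl hcu
  have himg' : t'.image ⇑ρ' = u' := by
    apply Finset.eq_of_subset_of_card_le
    · intro z hz
      obtain ⟨a, ha, rfl⟩ := Finset.mem_image.1 hz
      have : a ∈ (↑t' : Set _) := ha
      rw [← Finset.range_orderEmbOfFin t' rfl] at this
      obtain ⟨i, rfl⟩ := this
      rw [hρ' i]
      exact u'.orderEmbOfFin_mem hcu i
    · rw [Finset.card_image_of_injective _ ρ'.injective, hcu]
  refine ⟨ρ'.extendDomain (Equiv.refl _), fun j hj => ?_, ?_⟩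
  · exact Equiv.Perm.extendDomain_apply_not_subtype ρ' (Equiv.refl _) (by simp [hj])
  · apply Finset.eq_of_subset_of_card_le
    · intro z hz
      obtain ⟨a, ha, rfl⟩ := Finset.mem_image.1 hz
      have hPa : a ∈ wᶜ := htP a ha
      rw [Equiv.Perm.extendDomain_apply_subtype ρ' (Equiv.refl _) hPa]
      have hmem : ρ' ⟨a, hPa⟩ ∈ u' := by
        rw [← himg']
        exact Finset.mem_image_of_mem _ (by rw [ht', Finset.mem_subtype]; exact ha)
      rw [hu', Finset.mem_subtype] at hmem
      simpa using hmem
    · rw [Finset.card_image_of_injective t (Equiv.injective _), ← hcard]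




variable {p k : ℕ}

abbrev Subk (p k : ℕ) := {s : Finset (Fin p) // s.card = k}

def emb (s : Subk p k) : Fin k → Fin p := ⇑(s.1.orderEmbOfFin s.2)

lemma emb_inj (s : Subk p k) : Function.Injective (emb s) :=
  (s.1.orderEmbOfFin s.2).injective

lemma emb_mem (s : Subk p k) (t : Fin k) : emb s t ∈ s.1 := s.1.orderEmbOfFin_mem s.2 t

/-- image of a `k`-subset under a permutation of columns -/
def permSubk (π : Equiv.Perm (Fin p)) : Subk p k ≃ Subk p k where
  toFun s := ⟨s.1.image ⇑π, by rw [Finset.card_image_of_injective _ π.injective, s.2]⟩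
  invFun s := ⟨s.1.image ⇑π.symm, by rw [Finset.card_image_of_injective _ π.symm.injective, s.2]⟩
  left_inv s := Subtype.ext (by simp [Finset.image_image])
  right_inv s := Subtype.ext (by simp [Finset.image_image])


lemma permSubk_coe (π : Equiv.Perm (Fin p)) (s : Subk p k) :
    (permSubk π s).1 = s.1.image ⇑π := rfl

lemma permSubk_symm (π : Equiv.Perm (Fin p)) :
    (permSubk (p := p) (k := k) π).symm = permSubk π.symm :=
  Equiv.ext fun _ => rfl

lemma permSubk_trans (τ τ' : Equiv.Perm (Fin p)) (s : Subk p k) :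
    permSubk (τ.trans τ') s = permSubk τ' (permSubk τ s) :=
  Subtype.ext (by simp [permSubk_coe, Finset.image_image])

noncomputable def permFin (π : Equiv.Perm (Fin p)) (s : Subk p k) : Equiv.Perm (Fin k) :=
  Equiv.ofBijective
    (fun t => ((permSubk π s).1.orderIsoOfFin (permSubk π s).2).symm
      ⟨π (emb s t), by rw [permSubk_coe]; exact Finset.mem_image_of_mem _ (emb_mem s t)⟩)
    (Finite.injective_iff_bijective.1 (by
      intro a b h
      have h2 := congrArg (((permSubk π s).1.orderIsoOfFin (permSubk π s).2)) h
      simp only [OrderIso.apply_symm_apply] at h2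
      have h3 : π (emb s a) = π (emb s b) := congrArg Subtype.val h2
      exact emb_inj s (π.injective h3)))

lemma permFin_spec (π : Equiv.Perm (Fin p)) (s : Subk p k) (t : Fin k) :
    emb (permSubk π s) (permFin π s t) = π (emb s t) := by
  show ((permSubk π s).1.orderEmbOfFin (permSubk π s).2) (permFin π s t) = π (emb s t)
  rw [← Finset.coe_orderIsoOfFin_apply]
  show (((permSubk π s).1.orderIsoOfFin (permSubk π s).2)
    (((permSubk π s).1.orderIsoOfFin (permSubk π s).2).symm ⟨π (emb s t), _⟩) : Fin p) = _
  rw [OrderIso.apply_symm_apply]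

def colPerm (X : Type*) {n : ℕ} (ρ : Equiv.Perm (Fin p)) :
    (Fin n → Fin p → X) ≃ (Fin n → Fin p → X) :=
  Equiv.arrowCongr (Equiv.refl _) (Equiv.arrowCongr ρ.symm (Equiv.refl X))

lemma colPerm_apply (X : Type*) {n : ℕ} (ρ : Equiv.Perm (Fin p)) (x : Fin n → Fin p → X)
    (i : Fin n) (j : Fin p) : colPerm X ρ x i j = x i (ρ j) := rfl

lemma colPerm_colPerm (X : Type*) {n : ℕ} (τ₁ τ₂ : Equiv.Perm (Fin p))
    (x : Fin n → Fin p → X) : colPerm X τ₁ (colPerm X τ₂ x) = colPerm X (τ₁.trans τ₂) x := rfl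

section Geometry
variable (sdif : Finset (Fin k)) (s : Subk p k)

def seqG : Finset (Fin p) := sdifᶜ.image (emb s)
def sdifG : Finset (Fin p) := sdif.image (emb s)
def TT : Finset (Finset (Fin p)) := Finset.powersetCard sdif.card (seqG sdif s)ᶜ
def glue (t : Finset (Fin p)) : Finset (Fin p) := seqG sdif s ∪ t

lemma sdif_card_le : sdif.card ≤ k := by
  simpa using Finset.card_le_univ sdif

lemma card_seqG : (seqG sdif s).card = k - sdif.card := by
  rw [seqG, Finset.card_image_of_injective _ (emb_inj s), Finset.card_compl]
  simp

lemma card_sdifG : (sdifG sdif s).card = sdif.card := by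
  rw [sdifG, Finset.card_image_of_injective _ (emb_inj s)]

lemma disj_sdifG_seqG : Disjoint (sdifG sdif s) (seqG sdif s) := by
  rw [Finset.disjoint_left]
  rintro a ha ha'
  obtain ⟨u, hu, rfl⟩ := Finset.mem_image.1 ha
  obtain ⟨u', hu', he⟩ := Finset.mem_image.1 ha'
  rw [emb_inj s he] at hu'
  exact (Finset.mem_compl.1 hu') hu

lemma union_seq_sdif : seqG sdif s ∪ sdifG sdif s = s.1 := by
  rw [seqG, sdifG, ← Finset.image_union]
  have h1 : sdifᶜ ∪ sdif = Finset.univ := by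
    ext a; simp [em]; tauto
  rw [h1]
  apply Finset.eq_of_subset_of_card_le
  · intro a ha
    obtain ⟨u, _, rfl⟩ := Finset.mem_image.1 ha
    exact emb_mem s u
  · rw [Finset.card_image_of_injective _ (emb_inj s), s.2]
    simp

lemma TT_card (hkp : k ≤ p) :
    (TT sdif s).card = ((p - k + sdif.card).choose sdif.card) := by
  rw [TT, Finset.card_powersetCard, Finset.card_compl, card_seqG]
  congr 1
  have := sdif_card_le (k := k) sdif
  simp only [Fintype.card_fin]
  omega

lemma mem_TT {t : Finset (Fin p)} :
    t ∈ TT sdif s ↔ t ⊆ (seqG sdif s)ᶜ ∧ t.card = sdif.card := Finset.mem_powersetCard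

lemma disj_t_seqG {t : Finset (Fin p)} (ht : t ∈ TT sdif s) : Disjoint t (seqG sdif s) := by
  rw [Finset.disjoint_left]
  intro a ha ha'
  exact Finset.mem_compl.1 (((mem_TT sdif s).1 ht).1 ha) ha'

lemma glue_card {t : Finset (Fin p)} (ht : t ∈ TT sdif s) : (glue sdif s t).card = k := by
  rw [glue, Finset.card_union_of_disjoint (disj_t_seqG sdif s ht).symm, card_seqG,
    ((mem_TT sdif s).1 ht).2]
  have := sdif_card_le (k := k) sdif
  omega

lemma glue_inj {t t' : Finset (Fin p)} (ht : t ∈ TT sdif s) (ht' : t' ∈ TT sdif s)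
    (h : glue sdif s t = glue sdif s t') : t = t' := by
  have h1 : (seqG sdif s ∪ t) \ seqG sdif s = (seqG sdif s ∪ t') \ seqG sdif s := by
    rw [← glue, ← glue, h]
  rwa [Finset.union_sdiff_cancel_left (disj_t_seqG sdif s ht).symm,
    Finset.union_sdiff_cancel_left (disj_t_seqG sdif s ht').symm] at h1

lemma sdifG_mem_TT : sdifG sdif s ∈ TT sdif s := by
  rw [mem_TT]
  refine ⟨?_, card_sdifG sdif s⟩
  intro a ha
  rw [Finset.mem_compl]
  exact Finset.disjoint_left.1 (disj_sdifG_seqG sdif s) ha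

lemma glue_sdifG : glue sdif s (sdifG sdif s) = s.1 := union_seq_sdif sdif s

lemma exists_rho {t : Finset (Fin p)} (ht : t ∈ TT sdif s) :
    ∃ ρ : Equiv.Perm (Fin p), (∀ u : Fin k, u ∉ sdif → ρ (emb s u) = emb s u) ∧
      Finset.image ⇑ρ (glue sdif s t) = s.1 := by
  obtain ⟨ρ, hfix, himg⟩ := exists_perm_fix_image (seqG sdif s) t (sdifG sdif s)
    (disj_t_seqG sdif s ht) (disj_sdifG_seqG sdif s)
    (by rw [((mem_TT sdif s).1 ht).2, card_sdifG])
  refine ⟨ρ, fun u hu => hfix _ (Finset.mem_image_of_mem _ (Finset.mem_compl.2 hu)), ?_⟩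
  rw [glue, Finset.image_union, himg]
  have hseq : Finset.image ⇑ρ (seqG sdif s) = seqG sdif s := by
    rw [Finset.image_congr (g := id) (fun j hj => hfix j hj), Finset.image_id]
  rw [hseq, union_seq_sdif]

lemma cond_iff (π ρ : Equiv.Perm (Fin p)) (z s' : Subk p k) (g : Finset (Fin p))
    (himg : Finset.image ⇑ρ g = s'.1) :
    (((permSubk π).symm z).1 = g) ↔ ((permSubk (ρ.symm.trans π)).symm z = s') := by
  have hgcard : g.card = k := by
    rw [← s'.2, ← himg, Finset.card_image_of_injective _ ρ.injective]
  set v : Subk p k := ⟨g, hgcard⟩ with hv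
  have hρv : permSubk ρ v = s' := Subtype.ext himg
  have h1 : (((permSubk π).symm z).1 = g) ↔ ((permSubk π).symm z = v) := by
    constructor
    · intro h; exact Subtype.ext h
    · intro h; rw [h]
  rw [h1]
  rw [permSubk_symm (ρ.symm.trans π)]
  have h2 : (ρ.symm.trans π).symm = π.symm.trans ρ := by ext j; simp
  rw [h2, permSubk_trans, ← permSubk_symm π, ← hρv, Equiv.apply_eq_iff_eq]

end Geometry

section Wt
variable {X : Type*}

noncomputable def Wt (PX : X → ℝ) {n p : ℕ} (x : Fin n → Fin p → X) : ℝ :=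
  ∏ i, ∏ j, PX (x i j)

lemma Wt_colPerm (PX : X → ℝ) {n p : ℕ} (ρ : Equiv.Perm (Fin p)) (x : Fin n → Fin p → X) :
    Wt PX (colPerm X ρ x) = Wt PX x := by
  refine Finset.prod_congr rfl fun i _ => ?_
  exact Equiv.prod_comp ρ (fun j => PX (x i j))

lemma sum_Wt [Fintype X] (PX : X → ℝ) (hPX1 : ∑ a, PX a = 1) {n p : ℕ} :
    ∑ x : Fin n → Fin p → X, Wt (n := n) (p := p) PX x = 1 := by
  unfold Wt
  have h1 : ∑ row : Fin p → X, ∏ j, PX (row j) = 1 := by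
    rw [sum_fn_prod (fun _ a => PX a)]
    simp [hPX1]
  exact (sum_fn_prod (fun (_ : Fin n) (row : Fin p → X) => ∏ j, PX (row j))).trans
    (by simp [h1])

end Wt

end SRCAux


open Finset

attribute [local instance] Classical.propDecidable

namespace SupportRecoveryConv

variable {X B Y : Type*}

/-- `P_{Y|X_seq β_s}(y | x_seq, b)`: the conditional pmf of a single observation given only
the columns outside `sdif`, averaging the `sdif`-columns over the i.i.d. law `PX`. -/
noncomputable def margY [Fintype X] {k : ℕ} (PX : X → ℝ)
    (PY : Y → (Fin k → X) → (Fin k → B) → ℝ) (sdif : Finset (Fin k))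
    (y : Y) (x : Fin k → X) (b : Fin k → B) : ℝ :=
  ∑ x' : {i // i ∈ sdif} → X,
    (∏ i, PX (x' i)) * PY y (fun i => if h : i ∈ sdif then x' ⟨i, h⟩ else x i) b

/-- The `n`-measurement information density `ι^n(x_sdif; y | x_seq, b)`. -/
noncomputable def infoDens [Fintype X] {k n : ℕ} (PX : X → ℝ)
    (PY : Y → (Fin k → X) → (Fin k → B) → ℝ) (sdif : Finset (Fin k))
    (x : Fin n → Fin k → X) (y : Fin n → Y) (b : Fin k → B) : ℝ :=
  ∑ i, Real.log (PY (y i) (x i) b / margY PX PY sdif (y i) (x i) b)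

/-- The joint pmf of `(S, X, β_S, Y)`:  `S` uniform on `k`-subsets of `{1,…,p}`, i.i.d.
measurement matrix, `β_S ~ P_β`, and conditionally i.i.d. observations, where row `i` of the
matrix is restricted to the columns indexed by `S` (in increasing order). -/
noncomputable def joint (p k n : ℕ) (PX : X → ℝ) (Pβ : (Fin k → B) → ℝ)
    (PY : Y → (Fin k → X) → (Fin k → B) → ℝ)
    (ω : {s : Finset (Fin p) // s.card = k} ×
      (Fin n → Fin p → X) × (Fin k → B) × (Fin n → Y)) : ℝ :=
  ((p.choose k : ℝ))⁻¹ * (∏ i, ∏ j, PX (ω.2.1 i j)) * Pβ ω.2.2.1 *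
    ∏ i, PY (ω.2.2.2 i) (fun t => ω.2.1 i (ω.1.1.orderEmbOfFin ω.1.2 t)) ω.2.2.1

/-- The conditional pmf of `(X, β_s, Y)` given `S = s = {1,…,k}` (the first `k` columns). -/
noncomputable def cond {p k n : ℕ} (hkp : k ≤ p) (PX : X → ℝ) (Pβ : (Fin k → B) → ℝ)
    (PY : Y → (Fin k → X) → (Fin k → B) → ℝ)
    (ω : (Fin n → Fin p → X) × (Fin k → B) × (Fin n → Y)) : ℝ :=
  (∏ i, ∏ j, PX (ω.1 i j)) * Pβ ω.2.1 *
    ∏ i, PY (ω.2.2 i) (fun t => ω.1 i (Fin.castLE hkp t)) ω.2.1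


section ModelLemmas
variable [Fintype X] [Fintype B] [Fintype Y]

lemma margY_pos {k : ℕ} (PX : X → ℝ) (hPX0 : ∀ a, 0 ≤ PX a) (hPX1 : ∑ a, PX a = 1)
    (PY : Y → (Fin k → X) → (Fin k → B) → ℝ) (hPY0 : ∀ y x b, 0 < PY y x b)
    (sdif : Finset (Fin k)) (y : Y) (x : Fin k → X) (b : Fin k → B) :
    0 < margY PX PY sdif y x b := by
  have hc1 : ∑ x' : {i // i ∈ sdif} → X, ∏ i, PX (x' i) = 1 := by
    rw [SRCAux.sum_fn_prod (fun _ a => PX a)]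
    simp [hPX1]
  have hex : ∃ x' : {i // i ∈ sdif} → X, 0 < ∏ i, PX (x' i) := by
    by_contra hcon
    push_neg at hcon
    have : ∑ x' : {i // i ∈ sdif} → X, ∏ i, PX (x' i) ≤ 0 :=
      Finset.sum_nonpos (fun x' _ => hcon x')
    rw [hc1] at this; linarith
  obtain ⟨x₀, hx₀⟩ := hex
  unfold margY
  apply Finset.sum_pos' (fun x' _ => mul_nonneg (Finset.prod_nonneg fun i _ => hPX0 _)
    (hPY0 _ _ _).le)
  exact ⟨x₀, Finset.mem_univ _, mul_pos hx₀ (hPY0 _ _ _)⟩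

lemma margY_sum_one {k : ℕ} (PX : X → ℝ) (hPX1 : ∑ a, PX a = 1)
    (PY : Y → (Fin k → X) → (Fin k → B) → ℝ) (hPY1 : ∀ x b, ∑ y, PY y x b = 1)
    (sdif : Finset (Fin k)) (x : Fin k → X) (b : Fin k → B) :
    ∑ y, margY PX PY sdif y x b = 1 := by
  unfold margY
  rw [Finset.sum_comm]
  have hc1 : ∑ x' : {i // i ∈ sdif} → X, ∏ i, PX (x' i) = 1 := by
    rw [SRCAux.sum_fn_prod (fun _ a => PX a)]
    simp [hPX1]
  calc ∑ x' : {i // i ∈ sdif} → X, ∑ y, (∏ i, PX (x' i)) *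
        PY y (fun i => if h : i ∈ sdif then x' ⟨i, h⟩ else x i) b
      = ∑ x' : {i // i ∈ sdif} → X, (∏ i, PX (x' i)) := by
        refine Finset.sum_congr rfl fun x' _ => ?_
        rw [← Finset.mul_sum, hPY1, mul_one]
    _ = 1 := hc1

lemma margY_congr {k : ℕ} (PX : X → ℝ)
    (PY : Y → (Fin k → X) → (Fin k → B) → ℝ)
    (sdif : Finset (Fin k)) (y : Y) (x x' : Fin k → X) (b : Fin k → B)
    (h : ∀ i ∉ sdif, x i = x' i) :
    margY PX PY sdif y x b = margY PX PY sdif y x' b := by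
  unfold margY
  refine Finset.sum_congr rfl fun z _ => ?_
  congr 1
  congr 1
  funext i
  by_cases hi : i ∈ sdif
  · rw [dif_pos hi, dif_pos hi]
  · rw [dif_neg hi, dif_neg hi]
    exact h i hi

lemma event_bound {k n : ℕ} (PX : X → ℝ) (hPX0 : ∀ a, 0 ≤ PX a) (hPX1 : ∑ a, PX a = 1)
    (PY : Y → (Fin k → X) → (Fin k → B) → ℝ) (hPY0 : ∀ y x b, 0 < PY y x b)
    (sdif : Finset (Fin k)) (c δ : ℝ) (hc : 1 ≤ c) (hδ : 0 < δ)
    (w : Fin n → Fin k → X) (y : Fin n → Y) (b : Fin k → B)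
    (h : infoDens PX PY sdif w y b ≤ Real.log c + Real.log δ) :
    ∏ i, PY (y i) (w i) b ≤ c * δ * ∏ i, margY PX PY sdif (y i) (w i) b := by
  have hm : ∀ i : Fin n, 0 < margY PX PY sdif (y i) (w i) b :=
    fun i => margY_pos PX hPX0 hPX1 PY hPY0 sdif (y i) (w i) b
  have hP : 0 < ∏ i, PY (y i) (w i) b := Finset.prod_pos fun i _ => hPY0 _ _ _
  have hM : 0 < ∏ i, margY PX PY sdif (y i) (w i) b := Finset.prod_pos fun i _ => hm i
  have hc0 : (0:ℝ) < c := lt_of_lt_of_le one_pos hc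
  have hID : infoDens PX PY sdif w y b
      = Real.log ((∏ i, PY (y i) (w i) b) / ∏ i, margY PX PY sdif (y i) (w i) b) := by
    unfold infoDens
    rw [← Finset.prod_div_distrib, Real.log_prod]
    intro i _
    exact (div_pos (hPY0 _ _ _) (hm i)).ne'
  rw [hID, ← Real.log_mul hc0.ne' hδ.ne'] at h
  have h2 := (Real.log_le_log_iff (div_pos hP hM) (mul_pos hc0 hδ)).1 h
  rw [div_le_iff₀ hM] at h2
  linarith [h2]

end ModelLemmas

/-- Theorem 2 (converse), finite-alphabet form. -/
theorem converse (p k n : ℕ) (hk : 1 ≤ k) (hkp : k ≤ p) (hn : 1 ≤ n)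
    [Fintype X] [Fintype B] [Fintype Y] [Nonempty X] [Nonempty B] [Nonempty Y]
    (PX : X → ℝ) (hPX0 : ∀ x, 0 ≤ PX x) (hPX1 : ∑ x, PX x = 1)
    (Pβ : (Fin k → B) → ℝ) (hPβ0 : ∀ b, 0 ≤ Pβ b) (hPβ1 : ∑ b, Pβ b = 1)
    (hPβperm : ∀ (σ : Equiv.Perm (Fin k)) (b : Fin k → B), Pβ (b ∘ σ) = Pβ b)
    (PY : Y → (Fin k → X) → (Fin k → B) → ℝ)
    (hPY0 : ∀ y x b, 0 < PY y x b) (hPY1 : ∀ x b, ∑ y, PY y x b = 1)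
    (hPYperm : ∀ (σ : Equiv.Perm (Fin k)) (y : Y) (x : Fin k → X) (b : Fin k → B),
      PY y (x ∘ σ) (b ∘ σ) = PY y x b)
    (δ₁ : ℝ) (hδ₁ : 0 < δ₁)
    -- an arbitrary partition (sdif(b), seq(b)) of s = {1,…,k} with sdif(b) ≠ ∅
    (sdifF : (Fin k → B) → Finset (Fin k)) (hsdifF : ∀ b, (sdifF b).Nonempty)
    -- any decoder
    (d : (Fin n → Fin p → X) → (Fin n → Y) → {s : Finset (Fin p) // s.card = k}) :
    -- pe  =  P[d(X, Y) ≠ S]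
    (∑ ω : {s : Finset (Fin p) // s.card = k} ×
        (Fin n → Fin p → X) × (Fin k → B) × (Fin n → Y),
      if d ω.2.1 ω.2.2.2 ≠ ω.1 then joint p k n PX Pβ PY ω else 0)
    ≥
    -- P[ ι^n(X_{sdif(β_s)}; Y | X_{seq(β_s)}, β_s) ≤ log C(p−k+ℓ, ℓ) + log δ₁ | S = s ]
    (∑ ω : (Fin n → Fin p → X) × (Fin k → B) × (Fin n → Y),
      if infoDens PX PY (sdifF ω.2.1) (fun i t => ω.1 i (Fin.castLE hkp t)) ω.2.2 ω.2.1
          ≤ Real.log (((p - k + (sdifF ω.2.1).card).choose ((sdifF ω.2.1).card) : ℝ))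
            + Real.log δ₁
        then cond hkp PX Pβ PY ω else 0)
    - δ₁ := by
  have hcard : Fintype.card {s : Finset (Fin p) // s.card = k} = p.choose k := by
    rw [Fintype.card_finset_len, Fintype.card_fin]
  have hchoose_pos : (0:ℝ) < ((p.choose k : ℕ) : ℝ) := by exact_mod_cast Nat.choose_pos hkp
  set A : {s : Finset (Fin p) // s.card = k} → (Fin n → Fin p → X) → (Fin k → B) →
      (Fin n → Y) → Prop := fun s x b y =>
    infoDens PX PY (sdifF b) (fun i t => x i (SRCAux.emb s t)) y b
      ≤ Real.log (((p - k + (sdifF b).card).choose ((sdifF b).card) : ℝ)) + Real.log δ₁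
    with hA
  set A0 : (Fin n → Fin p → X) → (Fin k → B) → (Fin n → Y) → Prop := fun x b y =>
    infoDens PX PY (sdifF b) (fun i t => x i (Fin.castLE hkp t)) y b
      ≤ Real.log (((p - k + (sdifF b).card).choose ((sdifF b).card) : ℝ)) + Real.log δ₁
    with hA0
  set D : Equiv.Perm (Fin p) → (Fin n → Fin p → X) → (Fin n → Y) →
      {s : Finset (Fin p) // s.card = k} := fun π x y =>
    (SRCAux.permSubk π).symm (d (SRCAux.colPerm X π.symm x) y) with hD
  set M : {s : Finset (Fin p) // s.card = k} → (Fin k → B) → (Fin n → Fin p → X) →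
      (Fin n → Y) → ℝ := fun s b x y =>
    ∏ i, margY PX PY (sdifF b) (y i) (fun t => x i (SRCAux.emb s t)) b with hM
  set Cl : (Fin k → B) → ℝ := fun b =>
    (((p - k + (sdifF b).card).choose ((sdifF b).card) : ℕ) : ℝ) with hCl
  set QQ : ((Fin n → Fin p → X) → (Fin n → Y) → {s : Finset (Fin p) // s.card = k}) →
      {s : Finset (Fin p) // s.card = k} → (Fin k → B) → ℝ := fun D' s b =>
    ∑ x, ∑ y, if D' x y = s then SRCAux.Wt PX x * M s b x y else 0 with hQQ
  have hCl1 : ∀ b, 1 ≤ Cl b := by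
    intro b
    rw [hCl]
    show (1:ℝ) ≤ (((p - k + (sdifF b).card).choose ((sdifF b).card) : ℕ) : ℝ)
    exact_mod_cast Nat.succ_le_of_lt (Nat.choose_pos (Nat.le_add_left _ _))
  have hWnn : ∀ x : Fin n → Fin p → X, 0 ≤ SRCAux.Wt PX x := fun x =>
    Finset.prod_nonneg fun i _ => Finset.prod_nonneg fun j _ => hPX0 _
  have hMnn : ∀ s b x y, 0 ≤ M s b x y := fun s b x y =>
    Finset.prod_nonneg fun i _ =>
      (margY_pos PX hPX0 hPX1 PY hPY0 (sdifF b) (y i) _ b).le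
  have hjnn : ∀ (s : {s : Finset (Fin p) // s.card = k}) x b y,
      0 ≤ joint p k n PX Pβ PY (s, x, b, y) := by
    intro s x b y
    unfold joint
    have h1 : (0:ℝ) ≤ ((p.choose k : ℝ))⁻¹ := by positivity
    have h2 : (0:ℝ) ≤ ∏ i, ∏ j, PX (x i j) :=
      Finset.prod_nonneg fun i _ => Finset.prod_nonneg fun j _ => hPX0 _
    have h3 : (0:ℝ) ≤ ∏ i, PY (y i) (fun t => x i (s.1.orderEmbOfFin s.2 t)) b :=
      Finset.prod_nonneg fun i _ => (hPY0 _ _ _).le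
    have := hPβ0 b
    positivity
  -- Step 1: the error probability is invariant under conjugating the decoder
  have step1 : ∀ π : Equiv.Perm (Fin p),
      (∑ s : {s : Finset (Fin p) // s.card = k}, ∑ x, ∑ b, ∑ y,
        if d x y ≠ s then joint p k n PX Pβ PY (s, x, b, y) else 0)
      = (∑ s : {s : Finset (Fin p) // s.card = k}, ∑ x, ∑ b, ∑ y,
        if D π x y ≠ s then joint p k n PX Pβ PY (s, x, b, y) else 0) := by
    intro π
    rw [← Equiv.sum_comp (SRCAux.permSubk π) (fun s => ∑ x, ∑ b, ∑ y,
      if d x y ≠ s then joint p k n PX Pβ PY (s, x, b, y) else 0)]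
    refine Finset.sum_congr rfl fun s _ => ?_
    rw [← Equiv.sum_comp (SRCAux.colPerm X π.symm) (fun x => ∑ b, ∑ y,
      if d x y ≠ SRCAux.permSubk π s
        then joint p k n PX Pβ PY (SRCAux.permSubk π s, x, b, y) else 0)]
    refine Finset.sum_congr rfl fun x _ => ?_
    rw [← Equiv.sum_comp (Equiv.arrowCongr (SRCAux.permFin π s) (Equiv.refl B)) (fun b => ∑ y,
      if d (SRCAux.colPerm X π.symm x) y ≠ SRCAux.permSubk π s
        then joint p k n PX Pβ PY (SRCAux.permSubk π s, SRCAux.colPerm X π.symm x, b, y)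
        else 0)]
    refine Finset.sum_congr rfl fun b _ => Finset.sum_congr rfl fun y _ => ?_
    have hbp : (Equiv.arrowCongr (SRCAux.permFin π s) (Equiv.refl B)) b
        = b ∘ ⇑(SRCAux.permFin π s).symm := rfl
    have hcond : (d (SRCAux.colPerm X π.symm x) y ≠ SRCAux.permSubk π s) ↔ (D π x y ≠ s) := by
      rw [hD]
      simp only
      exact not_congr (Equiv.symm_apply_eq (SRCAux.permSubk π)).symm
    have hjeq : joint p k n PX Pβ PY (SRCAux.permSubk π s, SRCAux.colPerm X π.symm x,
        (Equiv.arrowCongr (SRCAux.permFin π s) (Equiv.refl B)) b, y)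
        = joint p k n PX Pβ PY (s, x, b, y) := by
      rw [hbp]
      show ((p.choose k : ℝ))⁻¹ * (∏ i, ∏ j, PX (SRCAux.colPerm X π.symm x i j))
          * Pβ (b ∘ ⇑(SRCAux.permFin π s).symm)
          * ∏ i, PY (y i) (fun t => SRCAux.colPerm X π.symm x i
              ((SRCAux.permSubk π s).1.orderEmbOfFin (SRCAux.permSubk π s).2 t))
            (b ∘ ⇑(SRCAux.permFin π s).symm)
        = ((p.choose k : ℝ))⁻¹ * (∏ i, ∏ j, PX (x i j)) * Pβ b
          * ∏ i, PY (y i) (fun t => x i (s.1.orderEmbOfFin s.2 t)) b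
      have hW : (∏ i, ∏ j, PX (SRCAux.colPerm X π.symm x i j)) = ∏ i, ∏ j, PX (x i j) := by
        refine Finset.prod_congr rfl fun i _ => ?_
        exact Equiv.prod_comp π.symm (fun j => PX (x i j))
      have hPb : Pβ (b ∘ ⇑(SRCAux.permFin π s).symm) = Pβ b := hPβperm _ b
      have hP : (∏ i, PY (y i) (fun t => SRCAux.colPerm X π.symm x i
              ((SRCAux.permSubk π s).1.orderEmbOfFin (SRCAux.permSubk π s).2 t))
            (b ∘ ⇑(SRCAux.permFin π s).symm))
          = ∏ i, PY (y i) (fun t => x i (s.1.orderEmbOfFin s.2 t)) b := by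
        refine Finset.prod_congr rfl fun i _ => ?_
        have harg : (fun t => SRCAux.colPerm X π.symm x i
              ((SRCAux.permSubk π s).1.orderEmbOfFin (SRCAux.permSubk π s).2 t))
            = (fun u => x i (s.1.orderEmbOfFin s.2 u)) ∘ ⇑(SRCAux.permFin π s).symm := by
          funext t
          show x i (π.symm (SRCAux.emb (SRCAux.permSubk π s) t))
            = x i (SRCAux.emb s ((SRCAux.permFin π s).symm t))
          congr 1
          have h1 : SRCAux.emb (SRCAux.permSubk π s) t
              = π (SRCAux.emb s ((SRCAux.permFin π s).symm t)) := by
            conv_lhs => rw [← Equiv.apply_symm_apply (SRCAux.permFin π s) t]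
            rw [SRCAux.permFin_spec]
          rw [h1, Equiv.symm_apply_apply]
        rw [harg]
        exact hPYperm (SRCAux.permFin π s).symm (y i) (fun u => x i (s.1.orderEmbOfFin s.2 u)) b
      rw [hW, hPb, hP]
    rw [if_congr hcond hjeq rfl]
  -- Step 2: total typical mass equals the conditional probability
  have step2 : (∑ s : {s : Finset (Fin p) // s.card = k}, ∑ x, ∑ b, ∑ y,
        if A s x b y then joint p k n PX Pβ PY (s, x, b, y) else 0)
      = ∑ x, ∑ b, ∑ y, if A0 x b y then cond hkp PX Pβ PY (x, b, y) else 0 := by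
    have per_s : ∀ s : {s : Finset (Fin p) // s.card = k},
        (∑ x, ∑ b, ∑ y, if A s x b y then joint p k n PX Pβ PY (s, x, b, y) else 0)
        = ((p.choose k : ℝ))⁻¹
          * ∑ x, ∑ b, ∑ y, if A0 x b y then cond hkp PX Pβ PY (x, b, y) else 0 := by
      intro s
      have hv : (Finset.map (Fin.castLEEmb hkp) Finset.univ).card = k := by
        rw [Finset.card_map, Finset.card_univ, Fintype.card_fin]
      have hvemb : ∀ t : Fin k,
          (Finset.map (Fin.castLEEmb hkp) Finset.univ).orderEmbOfFin hv t
            = Fin.castLE hkp t := by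
        have hmem : ∀ t : Fin k,
            Fin.castLE hkp t ∈ Finset.map (Fin.castLEEmb hkp) Finset.univ :=
          fun t => Finset.mem_map_of_mem _ (Finset.mem_univ t)
        have hsm : StrictMono (fun t : Fin k => Fin.castLE hkp t) :=
          Fin.strictMono_castLE hkp
        have := Finset.orderEmbOfFin_unique hv hmem hsm
        intro t
        exact (congrFun this t).symm
      obtain ⟨ρ, hρ⟩ := SRCAux.exists_perm_orderEmb s.1
        (Finset.map (Fin.castLEEmb hkp) Finset.univ) s.2 hv
      have hρ' : ∀ t : Fin k, ρ (SRCAux.emb s t) = Fin.castLE hkp t := by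
        intro t
        exact (hρ t).trans (hvemb t)
      rw [← Equiv.sum_comp (SRCAux.colPerm X ρ) (fun x => ∑ b, ∑ y,
        if A s x b y then joint p k n PX Pβ PY (s, x, b, y) else 0)]
      have hptw : ∀ x b y,
          (if A s (SRCAux.colPerm X ρ x) b y
            then joint p k n PX Pβ PY (s, SRCAux.colPerm X ρ x, b, y) else 0)
          = ((p.choose k : ℝ))⁻¹ * (if A0 x b y then cond hkp PX Pβ PY (x, b, y) else 0) := by
        intro x b y
        have harg : (fun i t => (SRCAux.colPerm X ρ x) i (SRCAux.emb s t))
            = (fun i t => x i (Fin.castLE hkp t)) := by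
          funext i t
          rw [SRCAux.colPerm_apply, hρ' t]
        have hAiff : A s (SRCAux.colPerm X ρ x) b y ↔ A0 x b y := by
          rw [hA, hA0]
          simp only
          rw [harg]
        have hjeq : joint p k n PX Pβ PY (s, SRCAux.colPerm X ρ x, b, y)
            = ((p.choose k : ℝ))⁻¹ * cond hkp PX Pβ PY (x, b, y) := by
          show ((p.choose k : ℝ))⁻¹ * (∏ i, ∏ j, PX (SRCAux.colPerm X ρ x i j)) * Pβ b *
              ∏ i, PY (y i) (fun t => SRCAux.colPerm X ρ x i (s.1.orderEmbOfFin s.2 t)) b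
            = ((p.choose k : ℝ))⁻¹ * ((∏ i, ∏ j, PX (x i j)) * Pβ b *
              ∏ i, PY (y i) (fun t => x i (Fin.castLE hkp t)) b)
          have hW : (∏ i, ∏ j, PX (SRCAux.colPerm X ρ x i j)) = ∏ i, ∏ j, PX (x i j) := by
            refine Finset.prod_congr rfl fun i _ => ?_
            exact Equiv.prod_comp ρ (fun j => PX (x i j))
          have hP : (∏ i, PY (y i) (fun t => SRCAux.colPerm X ρ x i
                (s.1.orderEmbOfFin s.2 t)) b)
              = ∏ i, PY (y i) (fun t => x i (Fin.castLE hkp t)) b := by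
            refine Finset.prod_congr rfl fun i _ => ?_
            congr 1
            exact congrFun harg i
          rw [hW, hP]
          ring
        rw [if_congr hAiff hjeq rfl, mul_ite, mul_zero]
      calc (∑ x, ∑ b, ∑ y, if A s (SRCAux.colPerm X ρ x) b y
              then joint p k n PX Pβ PY (s, SRCAux.colPerm X ρ x, b, y) else 0)
          = ∑ x, ∑ b, ∑ y, ((p.choose k : ℝ))⁻¹
              * (if A0 x b y then cond hkp PX Pβ PY (x, b, y) else 0) := by
            exact Finset.sum_congr rfl fun x _ => Finset.sum_congr rfl fun b _ =>
              Finset.sum_congr rfl fun y _ => hptw x b y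
        _ = _ := by
            symm
            rw [Finset.mul_sum]
            refine Finset.sum_congr rfl fun x _ => ?_
            rw [Finset.mul_sum]
            refine Finset.sum_congr rfl fun b _ => ?_
            rw [Finset.mul_sum]
    calc (∑ s : {s : Finset (Fin p) // s.card = k}, ∑ x, ∑ b, ∑ y,
          if A s x b y then joint p k n PX Pβ PY (s, x, b, y) else 0)
        = ∑ _s : {s : Finset (Fin p) // s.card = k}, ((p.choose k : ℝ))⁻¹
            * ∑ x, ∑ b, ∑ y, if A0 x b y then cond hkp PX Pβ PY (x, b, y) else 0 :=
          Finset.sum_congr rfl fun s _ => per_s s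
      _ = (Fintype.card {s : Finset (Fin p) // s.card = k} : ℝ) * (((p.choose k : ℝ))⁻¹
            * ∑ x, ∑ b, ∑ y, if A0 x b y then cond hkp PX Pβ PY (x, b, y) else 0) := by
          rw [Finset.sum_const, Finset.card_univ, nsmul_eq_mul]
      _ = _ := by
          rw [hcard, ← mul_assoc, mul_inv_cancel₀ hchoose_pos.ne', one_mul]
  -- Step 3: decomposition
  have step3 : ∀ D' : (Fin n → Fin p → X) → (Fin n → Y) → {s : Finset (Fin p) // s.card = k},
      (∑ s : {s : Finset (Fin p) // s.card = k}, ∑ x, ∑ b, ∑ y,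
        if D' x y ≠ s then joint p k n PX Pβ PY (s, x, b, y) else 0)
      ≥ (∑ s : {s : Finset (Fin p) // s.card = k}, ∑ x, ∑ b, ∑ y,
          if A s x b y then joint p k n PX Pβ PY (s, x, b, y) else 0)
        - (∑ s : {s : Finset (Fin p) // s.card = k}, ∑ x, ∑ b, ∑ y,
          if A s x b y ∧ D' x y = s then joint p k n PX Pβ PY (s, x, b, y) else 0) := by
    intro D'
    rw [ge_iff_le, sub_le_iff_le_add]
    have hpt : ∀ (s : {s : Finset (Fin p) // s.card = k}) x b y,
        (if A s x b y then joint p k n PX Pβ PY (s, x, b, y) else 0)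
        ≤ (if D' x y ≠ s then joint p k n PX Pβ PY (s, x, b, y) else 0)
          + (if A s x b y ∧ D' x y = s then joint p k n PX Pβ PY (s, x, b, y) else 0) := by
      intro s x b y
      have hj := hjnn s x b y
      split_ifs <;> first | linarith | tauto
    calc (∑ s : {s : Finset (Fin p) // s.card = k}, ∑ x, ∑ b, ∑ y,
          if A s x b y then joint p k n PX Pβ PY (s, x, b, y) else 0)
        ≤ ∑ s : {s : Finset (Fin p) // s.card = k}, ∑ x, ∑ b, ∑ y,
            ((if D' x y ≠ s then joint p k n PX Pβ PY (s, x, b, y) else 0)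
              + (if A s x b y ∧ D' x y = s then joint p k n PX Pβ PY (s, x, b, y) else 0)) := by
          refine Finset.sum_le_sum fun s _ => Finset.sum_le_sum fun x _ =>
            Finset.sum_le_sum fun b _ => Finset.sum_le_sum fun y _ => hpt s x b y
      _ = _ := by simp only [Finset.sum_add_distrib]
  -- Step 4: change of measure
  have step4 : ∀ D' : (Fin n → Fin p → X) → (Fin n → Y) → {s : Finset (Fin p) // s.card = k},
      (∑ s : {s : Finset (Fin p) // s.card = k}, ∑ x, ∑ b, ∑ y,
        if A s x b y ∧ D' x y = s then joint p k n PX Pβ PY (s, x, b, y) else 0)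
      ≤ ∑ s : {s : Finset (Fin p) // s.card = k}, ∑ b,
          (((p.choose k : ℝ))⁻¹ * Pβ b * (Cl b * δ₁)) * QQ D' s b := by
    intro D'
    have hpt : ∀ (s : {s : Finset (Fin p) // s.card = k}) x b y,
        (if A s x b y ∧ D' x y = s then joint p k n PX Pβ PY (s, x, b, y) else 0)
        ≤ (if D' x y = s then (((p.choose k : ℝ))⁻¹ * Pβ b * (Cl b * δ₁))
            * (SRCAux.Wt PX x * M s b x y) else 0) := by
      intro s x b y
      have hKnn : (0:ℝ) ≤ ((p.choose k : ℝ))⁻¹ * Pβ b * (Cl b * δ₁) := by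
        have h1 : (0:ℝ) ≤ ((p.choose k : ℝ))⁻¹ := by positivity
        have h2 := hPβ0 b
        have h3 : (0:ℝ) ≤ Cl b * δ₁ := mul_nonneg (le_trans zero_le_one (hCl1 b)) hδ₁.le
        exact mul_nonneg (mul_nonneg h1 h2) h3
      by_cases hDs : D' x y = s
      · rw [if_pos hDs]
        by_cases hAs : A s x b y
        · rw [if_pos ⟨hAs, hDs⟩]
          have hle : ∏ i, PY (y i) (fun t => x i (s.1.orderEmbOfFin s.2 t)) b
              ≤ Cl b * δ₁ * M s b x y := by
            have hev : infoDens PX PY (sdifF b) (fun i t => x i (SRCAux.emb s t)) y b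
                ≤ Real.log (Cl b) + Real.log δ₁ := hAs
            exact event_bound PX hPX0 hPX1 PY hPY0 (sdifF b) (Cl b) δ₁ (hCl1 b) hδ₁
              (fun i t => x i (SRCAux.emb s t)) y b hev
          have hfac : (0:ℝ) ≤ ((p.choose k : ℝ))⁻¹ * (∏ i, ∏ j, PX (x i j)) * Pβ b := by
            have h1 : (0:ℝ) ≤ ((p.choose k : ℝ))⁻¹ := by positivity
            exact mul_nonneg (mul_nonneg h1 (hWnn x)) (hPβ0 b)
          calc joint p k n PX Pβ PY (s, x, b, y)
              = (((p.choose k : ℝ))⁻¹ * (∏ i, ∏ j, PX (x i j)) * Pβ b)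
                * ∏ i, PY (y i) (fun t => x i (s.1.orderEmbOfFin s.2 t)) b := rfl
            _ ≤ (((p.choose k : ℝ))⁻¹ * (∏ i, ∏ j, PX (x i j)) * Pβ b)
                * (Cl b * δ₁ * M s b x y) := mul_le_mul_of_nonneg_left hle hfac
            _ = (((p.choose k : ℝ))⁻¹ * Pβ b * (Cl b * δ₁))
                * (SRCAux.Wt PX x * M s b x y) := by unfold SRCAux.Wt; ring
        · rw [if_neg (fun h => hAs h.1)]
          exact mul_nonneg hKnn (mul_nonneg (hWnn x) (hMnn s b x y))
      · rw [if_neg (fun h => hDs h.2), if_neg hDs]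
    calc (∑ s : {s : Finset (Fin p) // s.card = k}, ∑ x, ∑ b, ∑ y,
          if A s x b y ∧ D' x y = s then joint p k n PX Pβ PY (s, x, b, y) else 0)
        ≤ ∑ s : {s : Finset (Fin p) // s.card = k}, ∑ x, ∑ b, ∑ y,
            (if D' x y = s then (((p.choose k : ℝ))⁻¹ * Pβ b * (Cl b * δ₁))
              * (SRCAux.Wt PX x * M s b x y) else 0) := by
          refine Finset.sum_le_sum fun s _ => Finset.sum_le_sum fun x _ =>
            Finset.sum_le_sum fun b _ => Finset.sum_le_sum fun y _ => hpt s x b y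
      _ = _ := by
          refine Finset.sum_congr rfl fun s _ => ?_
          rw [Finset.sum_comm]
          refine Finset.sum_congr rfl fun b _ => ?_
          rw [hQQ]
          show _ = (((p.choose k : ℝ))⁻¹ * Pβ b * (Cl b * δ₁))
            * ∑ x, ∑ y, if D' x y = s then SRCAux.Wt PX x * M s b x y else 0
          rw [Finset.mul_sum]
          refine Finset.sum_congr rfl fun x _ => ?_
          rw [Finset.mul_sum]
          refine Finset.sum_congr rfl fun y _ => ?_
          rw [mul_ite, mul_zero]
  -- Step 5: counting over the symmetrized decoders
  have step5 : ∀ (s : {s : Finset (Fin p) // s.card = k}) (b : Fin k → B),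
      Cl b * (∑ π : Equiv.Perm (Fin p), QQ (D π) s b)
        ≤ (Fintype.card (Equiv.Perm (Fin p)) : ℝ) := by
    intro s b
    have hWM1 : ∑ x, ∑ y, SRCAux.Wt PX x * M s b x y = 1 := by
      have hMy : ∀ x : Fin n → Fin p → X, ∑ y : Fin n → Y, M s b x y = 1 := by
        intro x
        rw [hM]
        simp only
        refine (SRCAux.sum_fn_prod (fun (i : Fin n) (yy : Y) =>
          margY PX PY (sdifF b) yy (fun t => x i (SRCAux.emb s t)) b)).trans ?_
        refine Finset.prod_eq_one fun i _ => ?_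
        exact margY_sum_one PX hPX1 PY hPY1 (sdifF b) _ b
      calc ∑ x, ∑ y, SRCAux.Wt PX x * M s b x y
          = ∑ x : Fin n → Fin p → X, SRCAux.Wt PX x * ∑ y, M s b x y := by
            refine Finset.sum_congr rfl fun x _ => ?_
            rw [Finset.mul_sum]
        _ = ∑ x : Fin n → Fin p → X, SRCAux.Wt PX x := by
            refine Finset.sum_congr rfl fun x _ => ?_
            rw [hMy x, mul_one]
        _ = 1 := SRCAux.sum_Wt PX hPX1
    set R : Finset (Fin p) → ℝ := fun g => ∑ π : Equiv.Perm (Fin p), ∑ x, ∑ y,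
      if (D π x y).1 = g then SRCAux.Wt PX x * M s b x y else 0 with hR
    have hEt : ∀ t ∈ SRCAux.TT (sdifF b) s, R (SRCAux.glue (sdifF b) s t)
        = ∑ π : Equiv.Perm (Fin p), QQ (D π) s b := by
      intro t ht
      obtain ⟨ρ, hfix, himg⟩ := SRCAux.exists_rho (sdifF b) s ht
      have hper : ∀ π : Equiv.Perm (Fin p),
          (∑ x, ∑ y, if (D π x y).1 = SRCAux.glue (sdifF b) s t
            then SRCAux.Wt PX x * M s b x y else 0)
          = ∑ x, ∑ y, if D (ρ.symm.trans π) x y = s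
            then SRCAux.Wt PX x * M s b x y else 0 := by
        intro π
        rw [← Equiv.sum_comp (SRCAux.colPerm X ρ) (fun x => ∑ y,
          if (D π x y).1 = SRCAux.glue (sdifF b) s t
            then SRCAux.Wt PX x * M s b x y else 0)]
        refine Finset.sum_congr rfl fun x _ => Finset.sum_congr rfl fun y _ => ?_
        have hcond : ((D π (SRCAux.colPerm X ρ x) y).1 = SRCAux.glue (sdifF b) s t)
            ↔ (D (ρ.symm.trans π) x y = s) := by
          rw [hD]
          simp only
          rw [SRCAux.colPerm_colPerm X π.symm ρ x]
          have hpp : (ρ.symm.trans π).symm = π.symm.trans ρ := by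
            ext j
            simp
          rw [hpp]
          exact SRCAux.cond_iff π ρ (d (SRCAux.colPerm X (π.symm.trans ρ) x) y) s
            (SRCAux.glue (sdifF b) s t) himg
        have hw : SRCAux.Wt PX (SRCAux.colPerm X ρ x) = SRCAux.Wt PX x :=
          SRCAux.Wt_colPerm PX ρ x
        have hm2 : M s b (SRCAux.colPerm X ρ x) y = M s b x y := by
          rw [hM]
          simp only
          refine Finset.prod_congr rfl fun i _ => ?_
          refine margY_congr PX PY (sdifF b) (y i) _ _ b ?_
          intro u hu
          show x i (ρ (SRCAux.emb s u)) = x i (SRCAux.emb s u)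
          rw [hfix u hu]
        rw [if_congr hcond (by rw [hw, hm2]) rfl]
      calc R (SRCAux.glue (sdifF b) s t)
          = ∑ π : Equiv.Perm (Fin p), ∑ x, ∑ y,
              if D (ρ.symm.trans π) x y = s then SRCAux.Wt PX x * M s b x y else 0 := by
            rw [hR]
            exact Finset.sum_congr rfl fun π _ => hper π
        _ = ∑ π : Equiv.Perm (Fin p), ∑ x, ∑ y,
              if D π x y = s then SRCAux.Wt PX x * M s b x y else 0 :=
            Equiv.sum_comp (Equiv.mulRight ρ.symm) (fun π => ∑ x, ∑ y,
              if D π x y = s then SRCAux.Wt PX x * M s b x y else 0)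
        _ = ∑ π : Equiv.Perm (Fin p), QQ (D π) s b := by
            rw [hQQ]
    have hsum_le : ∑ t ∈ SRCAux.TT (sdifF b) s, R (SRCAux.glue (sdifF b) s t)
        ≤ (Fintype.card (Equiv.Perm (Fin p)) : ℝ) := by
      have huni : ∀ (π : Equiv.Perm (Fin p)) x y,
          (∑ t ∈ SRCAux.TT (sdifF b) s,
            if (D π x y).1 = SRCAux.glue (sdifF b) s t
              then SRCAux.Wt PX x * M s b x y else 0)
          ≤ SRCAux.Wt PX x * M s b x y := by
        intro π x y
        by_cases hex : ∃ t₀, t₀ ∈ SRCAux.TT (sdifF b) s ∧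
            (D π x y).1 = SRCAux.glue (sdifF b) s t₀
        · obtain ⟨t₀, ht₀, heq⟩ := hex
          rw [Finset.sum_eq_single_of_mem t₀ ht₀ ?side]
          · rw [if_pos heq]
          case side =>
            intro t ht hne
            rw [if_neg]
            intro hcontra
            exact hne (SRCAux.glue_inj (sdifF b) s ht ht₀ (hcontra.symm.trans heq))
        · push_neg at hex
          rw [Finset.sum_eq_zero (fun t ht => if_neg (hex t ht))]
          exact mul_nonneg (hWnn x) (hMnn s b x y)
      calc ∑ t ∈ SRCAux.TT (sdifF b) s, R (SRCAux.glue (sdifF b) s t)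
          = ∑ π : Equiv.Perm (Fin p), ∑ t ∈ SRCAux.TT (sdifF b) s, ∑ x, ∑ y,
              if (D π x y).1 = SRCAux.glue (sdifF b) s t
                then SRCAux.Wt PX x * M s b x y else 0 := by
            rw [hR]
            exact Finset.sum_comm
        _ = ∑ π : Equiv.Perm (Fin p), ∑ x, ∑ y, ∑ t ∈ SRCAux.TT (sdifF b) s,
              if (D π x y).1 = SRCAux.glue (sdifF b) s t
                then SRCAux.Wt PX x * M s b x y else 0 := by
            refine Finset.sum_congr rfl fun π _ => ?_
            rw [Finset.sum_comm]
            refine Finset.sum_congr rfl fun x _ => ?_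
            rw [Finset.sum_comm]
        _ ≤ ∑ π : Equiv.Perm (Fin p), ∑ x, ∑ y, SRCAux.Wt PX x * M s b x y :=
            Finset.sum_le_sum fun π _ => Finset.sum_le_sum fun x _ =>
              Finset.sum_le_sum fun y _ => huni π x y
        _ = ∑ _π : Equiv.Perm (Fin p), (1:ℝ) :=
            Finset.sum_congr rfl fun π _ => hWM1
        _ = (Fintype.card (Equiv.Perm (Fin p)) : ℝ) := by
            rw [Finset.sum_const, nsmul_eq_mul, mul_one, Finset.card_univ]
    have hTTcard : ((SRCAux.TT (sdifF b) s).card : ℝ) = Cl b := by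
      rw [SRCAux.TT_card (sdifF b) s hkp, hCl]
    calc Cl b * (∑ π : Equiv.Perm (Fin p), QQ (D π) s b)
        = ((SRCAux.TT (sdifF b) s).card : ℝ)
            * (∑ π : Equiv.Perm (Fin p), QQ (D π) s b) := by rw [hTTcard]
      _ = ∑ _t ∈ SRCAux.TT (sdifF b) s, (∑ π : Equiv.Perm (Fin p), QQ (D π) s b) := by
          rw [Finset.sum_const, nsmul_eq_mul]
      _ = ∑ t ∈ SRCAux.TT (sdifF b) s, R (SRCAux.glue (sdifF b) s t) :=
          Finset.sum_congr rfl fun t ht => (hEt t ht).symm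
      _ ≤ _ := hsum_le
  -- Assembly
  have hiterL : (∑ ω : {s : Finset (Fin p) // s.card = k} ×
        (Fin n → Fin p → X) × (Fin k → B) × (Fin n → Y),
      if d ω.2.1 ω.2.2.2 ≠ ω.1 then joint p k n PX Pβ PY ω else 0)
      = ∑ s : {s : Finset (Fin p) // s.card = k}, ∑ x, ∑ b, ∑ y,
        if d x y ≠ s then joint p k n PX Pβ PY (s, x, b, y) else 0 := by
    rw [Fintype.sum_prod_type]
    refine Finset.sum_congr rfl fun s _ => ?_
    rw [Fintype.sum_prod_type]
    refine Finset.sum_congr rfl fun x _ => ?_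
    rw [Fintype.sum_prod_type]
  have hiterR : (∑ ω : (Fin n → Fin p → X) × (Fin k → B) × (Fin n → Y),
      if infoDens PX PY (sdifF ω.2.1) (fun i t => ω.1 i (Fin.castLE hkp t)) ω.2.2 ω.2.1
          ≤ Real.log (((p - k + (sdifF ω.2.1).card).choose ((sdifF ω.2.1).card) : ℝ))
            + Real.log δ₁
        then cond hkp PX Pβ PY ω else 0)
      = ∑ x, ∑ b, ∑ y, if A0 x b y then cond hkp PX Pβ PY (x, b, y) else 0 := by
    rw [Fintype.sum_prod_type]
    refine Finset.sum_congr rfl fun x _ => ?_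
    rw [Fintype.sum_prod_type]
  rw [ge_iff_le, hiterL, hiterR]
  have hNpos : 0 < (Fintype.card (Equiv.Perm (Fin p)) : ℝ) := by
    exact_mod_cast Fintype.card_pos
  have hπbound : ∀ π : Equiv.Perm (Fin p),
      (∑ x, ∑ b, ∑ y, if A0 x b y then cond hkp PX Pβ PY (x, b, y) else 0)
        - (∑ s : {s : Finset (Fin p) // s.card = k}, ∑ b,
            (((p.choose k : ℝ))⁻¹ * Pβ b * (Cl b * δ₁)) * QQ (D π) s b)
      ≤ ∑ s : {s : Finset (Fin p) // s.card = k}, ∑ x, ∑ b, ∑ y,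
          if d x y ≠ s then joint p k n PX Pβ PY (s, x, b, y) else 0 := by
    intro π
    have h1 := step3 (D π)
    rw [step2] at h1
    have h2 := step4 (D π)
    have h3 := step1 π
    linarith [h1, h2, h3]
  have hsumπ : ∑ π : Equiv.Perm (Fin p),
      (∑ s : {s : Finset (Fin p) // s.card = k}, ∑ b,
        (((p.choose k : ℝ))⁻¹ * Pβ b * (Cl b * δ₁)) * QQ (D π) s b)
      ≤ (Fintype.card (Equiv.Perm (Fin p)) : ℝ) * δ₁ := by
    have hswap : ∑ π : Equiv.Perm (Fin p),
        (∑ s : {s : Finset (Fin p) // s.card = k}, ∑ b,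
          (((p.choose k : ℝ))⁻¹ * Pβ b * (Cl b * δ₁)) * QQ (D π) s b)
        = ∑ s : {s : Finset (Fin p) // s.card = k}, ∑ b, ∑ π : Equiv.Perm (Fin p),
          (((p.choose k : ℝ))⁻¹ * Pβ b * (Cl b * δ₁)) * QQ (D π) s b := by
      rw [Finset.sum_comm]
      exact Finset.sum_congr rfl fun s _ => Finset.sum_comm
    rw [hswap]
    have hsb : ∀ (s : {s : Finset (Fin p) // s.card = k}) (b : Fin k → B),
        (∑ π : Equiv.Perm (Fin p),
          (((p.choose k : ℝ))⁻¹ * Pβ b * (Cl b * δ₁)) * QQ (D π) s b)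
        ≤ ((p.choose k : ℝ))⁻¹ * Pβ b * δ₁ * (Fintype.card (Equiv.Perm (Fin p)) : ℝ) := by
      intro s b
      have hKnn : (0:ℝ) ≤ ((p.choose k : ℝ))⁻¹ * Pβ b * δ₁ := by
        have h1 : (0:ℝ) ≤ ((p.choose k : ℝ))⁻¹ := by positivity
        exact mul_nonneg (mul_nonneg h1 (hPβ0 b)) hδ₁.le
      calc ∑ π : Equiv.Perm (Fin p),
            (((p.choose k : ℝ))⁻¹ * Pβ b * (Cl b * δ₁)) * QQ (D π) s b
          = (((p.choose k : ℝ))⁻¹ * Pβ b * (Cl b * δ₁))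
              * ∑ π : Equiv.Perm (Fin p), QQ (D π) s b := by
            rw [Finset.mul_sum]
        _ = (((p.choose k : ℝ))⁻¹ * Pβ b * δ₁)
              * (Cl b * ∑ π : Equiv.Perm (Fin p), QQ (D π) s b) := by ring
        _ ≤ (((p.choose k : ℝ))⁻¹ * Pβ b * δ₁)
              * (Fintype.card (Equiv.Perm (Fin p)) : ℝ) :=
            mul_le_mul_of_nonneg_left (step5 s b) hKnn
        _ = ((p.choose k : ℝ))⁻¹ * Pβ b * δ₁ * (Fintype.card (Equiv.Perm (Fin p)) : ℝ) := by
            ring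
    calc (∑ s : {s : Finset (Fin p) // s.card = k}, ∑ b, ∑ π : Equiv.Perm (Fin p),
          (((p.choose k : ℝ))⁻¹ * Pβ b * (Cl b * δ₁)) * QQ (D π) s b)
        ≤ ∑ s : {s : Finset (Fin p) // s.card = k}, ∑ b,
            ((p.choose k : ℝ))⁻¹ * Pβ b * δ₁ * (Fintype.card (Equiv.Perm (Fin p)) : ℝ) :=
          Finset.sum_le_sum fun s _ => Finset.sum_le_sum fun b _ => hsb s b
      _ = ∑ _s : {s : Finset (Fin p) // s.card = k},
            ((p.choose k : ℝ))⁻¹ * δ₁ * (Fintype.card (Equiv.Perm (Fin p)) : ℝ) := by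
          refine Finset.sum_congr rfl fun s _ => ?_
          calc (∑ b, ((p.choose k : ℝ))⁻¹ * Pβ b * δ₁
                * (Fintype.card (Equiv.Perm (Fin p)) : ℝ))
              = ∑ b, (((p.choose k : ℝ))⁻¹ * δ₁
                  * (Fintype.card (Equiv.Perm (Fin p)) : ℝ)) * Pβ b := by
                refine Finset.sum_congr rfl fun b _ => ?_
                ring
            _ = (((p.choose k : ℝ))⁻¹ * δ₁ * (Fintype.card (Equiv.Perm (Fin p)) : ℝ))
                  * ∑ b, Pβ b := by rw [Finset.mul_sum]
            _ = ((p.choose k : ℝ))⁻¹ * δ₁ * (Fintype.card (Equiv.Perm (Fin p)) : ℝ) := by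
                rw [hPβ1, mul_one]
      _ = (Fintype.card {s : Finset (Fin p) // s.card = k} : ℝ)
            * (((p.choose k : ℝ))⁻¹ * δ₁ * (Fintype.card (Equiv.Perm (Fin p)) : ℝ)) := by
          rw [Finset.sum_const, Finset.card_univ, nsmul_eq_mul]
      _ = (Fintype.card (Equiv.Perm (Fin p)) : ℝ) * δ₁ := by
          rw [hcard]
          field_simp
  have hmain : (Fintype.card (Equiv.Perm (Fin p)) : ℝ)
      * ((∑ x, ∑ b, ∑ y, if A0 x b y then cond hkp PX Pβ PY (x, b, y) else 0) - δ₁)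
      ≤ (Fintype.card (Equiv.Perm (Fin p)) : ℝ)
      * (∑ s : {s : Finset (Fin p) // s.card = k}, ∑ x, ∑ b, ∑ y,
          if d x y ≠ s then joint p k n PX Pβ PY (s, x, b, y) else 0) := by
    have h1 : ∑ π : Equiv.Perm (Fin p),
        ((∑ x, ∑ b, ∑ y, if A0 x b y then cond hkp PX Pβ PY (x, b, y) else 0)
          - (∑ s : {s : Finset (Fin p) // s.card = k}, ∑ b,
              (((p.choose k : ℝ))⁻¹ * Pβ b * (Cl b * δ₁)) * QQ (D π) s b))
        ≤ ∑ _π : Equiv.Perm (Fin p),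
            (∑ s : {s : Finset (Fin p) // s.card = k}, ∑ x, ∑ b, ∑ y,
              if d x y ≠ s then joint p k n PX Pβ PY (s, x, b, y) else 0) :=
      Finset.sum_le_sum fun π _ => hπbound π
    rw [Finset.sum_sub_distrib, Finset.sum_const, Finset.sum_const, Finset.card_univ,
      nsmul_eq_mul, nsmul_eq_mul] at h1
    have h2 := hsumπ
    rw [mul_sub]
    linarith [h1, h2]
  have := (mul_le_mul_iff_right₀ hNpos).1 hmain
  linarith [this]

end SupportRecoveryConv
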